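/- arXiv:2404.13240 — 3 statements merged into one kernel-verified Lean document; each statement's English description precedes it below -/
import Mathlib

section
/- If a threshold θ satisfies π(θ) < p₋/(p₊δ₂ + p₋), where δ₂ > 0 lower-bounds the likelihood ratio φ(x|1)/φ(x|0), then the performative utility is bounded: U_perf(θ) ≤ p₊p₋/(p₊δ₂ + p₋)·ℙ(X>θ|Y=1) ≤ p₋/δ₂. -/
/-- if a threshold's qualification rate is below pNeg/(pPos·δ₂+pNeg)
then its performative utility is at most pPos·pNeg/(pPos·δ₂+pNeg)·TPR(θ) ≤ pNeg/δ₂. -/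
theorem low_qualification_utility_bound
    (TPR FPR π φ1 φ0 : ℝ → ℝ) (pPos pNeg δ₂ θ : ℝ)
    (hpPos : 0 < pPos) (hpNeg : 0 < pNeg) (hδ₂ : 0 < δ₂)
    (hTPR : TPR θ ∈ Set.Icc (0:ℝ) 1)
    (hFPR : FPR θ ∈ Set.Icc (0:ℝ) 1)
    (hπ : π θ ∈ Set.Icc (0:ℝ) 1)
    (hratio : ∀ x ∈ Set.Icc (0:ℝ) 1, δ₂ < φ1 x / φ0 x)
    (hsmall : π θ < pNeg / (pPos * δ₂ + pNeg)) :
    pPos * TPR θ * π θ - pNeg * FPR θ * (1 - π θ) ≤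
      pPos * pNeg / (pPos * δ₂ + pNeg) * TPR θ ∧
    pPos * pNeg / (pPos * δ₂ + pNeg) * TPR θ ≤ pNeg / δ₂ := by
  obtain ⟨hT0, hT1⟩ := hTPR
  obtain ⟨hF0, hF1⟩ := hFPR
  obtain ⟨hπ0, hπ1⟩ := hπ
  have hd : 0 < pPos * δ₂ + pNeg := by positivity
  constructor
  · have h1 : pPos * TPR θ * π θ - pNeg * FPR θ * (1 - π θ) ≤ pPos * TPR θ * π θ := by
      nlinarith [mul_nonneg (mul_nonneg hpNeg.le hF0) (by linarith : (0:ℝ) ≤ 1 - π θ)]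
    have h2 : pPos * TPR θ * π θ ≤ pPos * TPR θ * (pNeg / (pPos * δ₂ + pNeg)) := by
      apply mul_le_mul_of_nonneg_left hsmall.le (by positivity)
    calc pPos * TPR θ * π θ - pNeg * FPR θ * (1 - π θ)
        ≤ pPos * TPR θ * (pNeg / (pPos * δ₂ + pNeg)) := h1.trans h2
      _ = pPos * pNeg / (pPos * δ₂ + pNeg) * TPR θ := by ring
  · have h3 : pPos * pNeg / (pPos * δ₂ + pNeg) * TPR θ ≤ pPos * pNeg / (pPos * δ₂ + pNeg) := by
      nlinarith [div_nonneg (by positivity : (0:ℝ) ≤ pPos * pNeg) hd.le]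
    refine h3.trans ?_
    rw [div_le_div_iff₀ hd hδ₂]
    nlinarith
end

section
/- Let y₀ < y₁ and suppose x ↦ φ(x|y₁)/φ(x|y₀) is increasing. Then for any probability density p on [0,1] and any y ∈ (0,1), the ratio x ↦ (∫₀^y φ(x|t)p(t)dt)/(∫_y^1 φ(x|t)p(t)dt) is monotonically decreasing in x, assuming φ(x|t)/φ(x|s) is decreasing in x whenever t < s, uniformly over all pairs t < s. -/
/-- under the monotone likelihood ratio property, the ratio
(∫₀^y φ(x|t)p(t)dt)/(∫_y^1 φ(x|t)p(t)dt) is monotonically decreasing in x. -/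
theorem mlr_ratio_antitone
    (φ : ℝ → ℝ → ℝ) (p : ℝ → ℝ) (y : ℝ)
    (hy : y ∈ Set.Ioo (0:ℝ) 1)
    (hφpos : ∀ x ∈ Set.Icc (0:ℝ) 1, ∀ t ∈ Set.Icc (0:ℝ) 1, 0 < φ x t)
    (hφcont : Continuous fun q : ℝ × ℝ => φ q.1 q.2)
    (hp : ∀ t ∈ Set.Icc (0:ℝ) 1, 0 ≤ p t)
    (hpcont : Continuous p)
    (hpdens : (∫ t in (0:ℝ)..1, p t) = 1)
    (hMLR : ∀ s ∈ Set.Icc (0:ℝ) 1, ∀ t ∈ Set.Icc (0:ℝ) 1, s < t →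
        MonotoneOn (fun x => φ x t / φ x s) (Set.Icc 0 1)) :
    AntitoneOn
      (fun x => (∫ t in (0:ℝ)..y, φ x t * p t) / (∫ t in y..1, φ x t * p t))
      (Set.Icc 0 1) := by
  obtain ⟨hy0, hy1⟩ := hy
  intro x₁ hx₁ x₂ hx₂ h12
  have hcontφ : ∀ x : ℝ, Continuous fun t => φ x t := fun x =>
    hφcont.comp (Continuous.prodMk_right x)
  have hcont : ∀ x : ℝ, Continuous fun t => φ x t * p t := fun x =>
    (hcontφ x).mul hpcont
  set N : ℝ → ℝ := fun x => ∫ t in (0:ℝ)..y, φ x t * p t with hN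
  set D : ℝ → ℝ := fun x => ∫ t in y..1, φ x t * p t with hD
  have hDnonneg : ∀ x ∈ Set.Icc (0:ℝ) 1, 0 ≤ D x := by
    intro x hx
    apply intervalIntegral.integral_nonneg hy1.le
    intro t ht
    have htI : t ∈ Set.Icc (0:ℝ) 1 := ⟨hy0.le.trans ht.1, ht.2⟩
    exact mul_nonneg (hφpos x hx t htI).le (hp t htI)
  -- if D vanishes at one point it vanishes everywhere
  have hzero : ∀ x ∈ Set.Icc (0:ℝ) 1, D x = 0 → ∀ x' ∈ Set.Icc (0:ℝ) 1, D x' = 0 := by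
    intro x hx hDx x' hx'
    have hDx' : ∫ t in y..1, φ x t * p t = 0 := hDx
    have hint : ∫ t in Set.Ioc y 1, φ x t * p t = 0 := by
      rwa [intervalIntegral.integral_of_le hy1.le] at hDx'
    have hinteg : MeasureTheory.IntegrableOn (fun t => φ x t * p t) (Set.Ioc y 1) := by
      exact (hcont x).integrableOn_Ioc
    have hnn : 0 ≤ᵐ[MeasureTheory.volume.restrict (Set.Ioc y 1)] fun t => φ x t * p t := by
      filter_upwards [MeasureTheory.ae_restrict_mem measurableSet_Ioc] with t ht
      have htI : t ∈ Set.Icc (0:ℝ) 1 := ⟨(hy0.trans ht.1).le, ht.2⟩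
      exact mul_nonneg (hφpos x hx t htI).le (hp t htI)
    have hae := (MeasureTheory.integral_eq_zero_iff_of_nonneg_ae hnn hinteg).mp hint
    have hp0 : ∀ᵐ t ∂(MeasureTheory.volume.restrict (Set.Ioc y 1)), φ x' t * p t = 0 := by
      filter_upwards [hae, MeasureTheory.ae_restrict_mem measurableSet_Ioc] with t h ht
      have htI : t ∈ Set.Icc (0:ℝ) 1 := ⟨(hy0.trans ht.1).le, ht.2⟩
      have hpt : p t = 0 := by
        have h0 : φ x t * p t = 0 := h
        
        rcases mul_eq_zero.mp h0 with h' | h'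
        · exact absurd h' (hφpos x hx t htI).ne'
        · exact h'
      simp [hpt]
    rw [hD]
    simp only
    rw [intervalIntegral.integral_of_le hy1.le]
    exact MeasureTheory.integral_eq_zero_of_ae hp0
  -- pointwise MLR inequality
  have key : ∀ s ∈ Set.Icc (0:ℝ) 1, ∀ t ∈ Set.Icc (0:ℝ) 1, s ≤ t →
      φ x₂ s * φ x₁ t ≤ φ x₁ s * φ x₂ t := by
    intro s hs t ht hst
    rcases eq_or_lt_of_le hst with rfl | hlt
    · ring_nf; exact le_refl _
    · have hm := hMLR s hs t ht hlt hx₁ hx₂ h12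
      simp only at hm
      rw [div_le_div_iff₀ (hφpos x₁ hx₁ s hs) (hφpos x₂ hx₂ s hs)] at hm
      nlinarith [hm]
  -- integrand-level inequality for fixed s
  have step : ∀ s ∈ Set.Icc (0:ℝ) y, φ x₂ s * p s * D x₁ ≤ φ x₁ s * p s * D x₂ := by
    intro s hs
    have hsI : s ∈ Set.Icc (0:ℝ) 1 := ⟨hs.1, hs.2.trans hy1.le⟩
    have e1 : φ x₂ s * p s * D x₁ = ∫ t in y..1, φ x₂ s * p s * (φ x₁ t * p t) := by
      rw [hD]; simp only
      rw [← intervalIntegral.integral_const_mul]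
    have e2 : φ x₁ s * p s * D x₂ = ∫ t in y..1, φ x₁ s * p s * (φ x₂ t * p t) := by
      rw [hD]; simp only
      rw [← intervalIntegral.integral_const_mul]
    rw [e1, e2]
    apply intervalIntegral.integral_mono_on hy1.le
    · exact ((continuous_const.mul (hcont x₁))).intervalIntegrable _ _
    · exact ((continuous_const.mul (hcont x₂))).intervalIntegrable _ _
    · intro t ht
      have htI : t ∈ Set.Icc (0:ℝ) 1 := ⟨hy0.le.trans ht.1, ht.2⟩
      have hst : s ≤ t := hs.2.trans ht.1
      have hk := key s hsI t htI hst
      have hps := hp s hsI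
      have hpt := hp t htI
      nlinarith [mul_nonneg hps hpt]
  have cross : N x₂ * D x₁ ≤ N x₁ * D x₂ := by
    have e1 : N x₂ * D x₁ = ∫ s in (0:ℝ)..y, φ x₂ s * p s * D x₁ := by
      rw [hN]; simp only
      rw [intervalIntegral.integral_mul_const]
    have e2 : N x₁ * D x₂ = ∫ s in (0:ℝ)..y, φ x₁ s * p s * D x₂ := by
      rw [hN]; simp only
      rw [intervalIntegral.integral_mul_const]
    rw [e1, e2]
    apply intervalIntegral.integral_mono_on hy0.le
    · exact ((hcont x₂).mul continuous_const).intervalIntegrable _ _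
    · exact ((hcont x₁).mul continuous_const).intervalIntegrable _ _
    · exact step
  rcases eq_or_lt_of_le (hDnonneg x₁ hx₁) with hD1 | hD1
  · have hD2 : D x₂ = 0 := hzero x₁ hx₁ hD1.symm x₂ hx₂
    show N x₂ / D x₂ ≤ N x₁ / D x₁
    rw [hD2, ← hD1, div_zero, div_zero]
  · have hD2 : 0 < D x₂ := by
      rcases eq_or_lt_of_le (hDnonneg x₂ hx₂) with h | h
      · exact absurd (hzero x₂ hx₂ h.symm x₁ hx₁) hD1.ne'
      · exact h
    show N x₂ / D x₂ ≤ N x₁ / D x₁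
    rw [div_le_div_iff₀ hD2 hD1]
    exact cross
end

section
/- In the Coate–Loury model with p₋ = 0: every stable threshold θ_stab satisfies π(θ_stab) = 0 and hence U_perf(θ_stab) = 0, while if there exists θ̃ with G(w[TPR(θ̃) − FPR(θ̃)]) > 0 and TPR(θ̃) > 0, then the optimal performative utility is strictly positive: U_perf(θ_opt) > 0 = U_perf(θ_stab). -/
/-- Coate–Loury model with zero penalty pNeg = 0. Every stable
threshold has π = 0 and zero performative utility, while (given a threshold
with positive induced qualification and positive TPR) the optimal performative
utility is strictly positive. -/
theorem zero_penalty_stable_vs_optimal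
    (TPR FPR π G : ℝ → ℝ) (w pPos θtil : ℝ)
    (hw : 0 < w) (hpPos : 0 < pPos)
    (hTPR : ∀ θ, TPR θ ∈ Set.Icc (0:ℝ) 1)
    (hFPR : ∀ θ, FPR θ ∈ Set.Icc (0:ℝ) 1)
    (hGrange : ∀ t, G t ∈ Set.Icc (0:ℝ) 1)
    (hG0 : G 0 = 0)
    (hπ : ∀ θ, π θ = G (w * (TPR θ - FPR θ)))
    (hTPR1 : TPR 1 = 0) (hFPR1 : FPR 1 = 0)
    (hTPR0 : TPR 0 = 1) (hFPR0 : FPR 0 = 1)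
    (hTPRanti : StrictAntiOn TPR (Set.Icc 0 1))
    (hθtil : θtil ∈ Set.Icc (0:ℝ) 1)
    (hπtil : 0 < π θtil) (hTPRtil : 0 < TPR θtil) :
    (∀ θstab ∈ Set.Icc (0:ℝ) 1,
        (∀ θ ∈ Set.Icc (0:ℝ) 1,
            pPos * π θstab * TPR θ ≤ pPos * π θstab * TPR θstab) →
        π θstab = 0 ∧ pPos * TPR θstab * π θstab = 0) ∧
    (∀ θopt ∈ Set.Icc (0:ℝ) 1,
        (∀ θ ∈ Set.Icc (0:ℝ) 1,
            pPos * TPR θ * π θ ≤ pPos * TPR θopt * π θopt) →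
        0 < pPos * TPR θopt * π θopt) := by
  constructor
  · intro θstab hmem hbr
    have hπ0 : π θstab = 0 := by
      by_contra hne
      have hπpos : 0 < π θstab := lt_of_le_of_ne (by rw [hπ]; exact (hGrange _).1) (Ne.symm hne)
      have h0 : (0:ℝ) ∈ Set.Icc (0:ℝ) 1 := by constructor <;> norm_num
      have h1 := hbr 0 h0
      rw [hTPR0] at h1
      have hle : 1 ≤ TPR θstab := by
        have := mul_le_mul_iff_right₀ (mul_pos hpPos hπpos) |>.mp h1
        linarith
      have heq : TPR θstab = 1 := le_antisymm (hTPR θstab).2 hle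
      have hθ0 : θstab = 0 := by
        by_contra hne0
        have hlt : (0:ℝ) < θstab := lt_of_le_of_ne hmem.1 (Ne.symm hne0)
        have := hTPRanti h0 hmem hlt
        rw [hTPR0, heq] at this
        exact lt_irrefl _ this
      rw [hθ0, hπ, hTPR0, hFPR0] at hπpos
      simp [hG0] at hπpos
    exact ⟨hπ0, by rw [hπ0]; ring⟩
  · intro θopt hmem hbr
    have := hbr θtil hθtil
    have hpos : 0 < pPos * TPR θtil * π θtil :=
      mul_pos (mul_pos hpPos hTPRtil) hπtil
    linarith
end
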